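/- Let G be an abelian group, let S be a finite subset of G with 0 ∈ S, and let k ≥ 1 be such that κ_3(S) = |S|. (a) Let F be a k-fragment of S with |F| ≥ k+1 and let a ∈ F+S be such that |(a−S) ∩ F| = 1, say (a−S) ∩ F = {b}; then F∖{b} is a k-fragment of S. (b) Let A be a k-atom of S with 0 ∈ A and |A| ≥ k+1, put S^∗ = S∖{0} and E = {(x,y) ∈ A×A : x−y ∈ S^∗}. Then: (1) for every x ∈ A+S, |(x−S) ∩ A| ≥ 2; (2) |A| ≤ |E| = Σ_{x∈A} |(x−S^∗) ∩ A| ≤ (|S|−1)|A| − 2κ_k(S); (3) there is a nonempty subset R ⊆ E such that Σ_{(x,y)∈R} (x−y) = 0. -/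

import Mathlib

open scoped Classical Pointwise

section Defs

variable {G : Type*} [AddCommGroup G]

/-- `P` is an arithmetic progression with difference `r`. -/
def IsAP {A : Type*} [AddCommGroup A] (r : A) (P : Finset A) : Prop :=
  ∃ (a : A) (n : ℕ), P.card = n ∧ P = (Finset.range n).image fun i => a + i • r

/-- `P` is an `(r,−j)`–progression: obtained from an `r`-progression by deleting `j` elements. -/
def IsAPMinus {A : Type*} [AddCommGroup A] (r : A) (j : ℕ) (P : Finset A) : Prop :=
  ∃ Q : Finset A, IsAP r Q ∧ P ⊆ Q ∧ Q.card = P.card + j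

/-- A finite set is aperiodic if its only period is `0`. -/
def IsAperiodic (X : Finset G) : Prop :=
  ∀ h : G, X + ({h} : Finset G) = X → h = 0

/-- `A` is `H`-periodic (a union of `H`-cosets): `A + H = A`. -/
def HPeriodic (H : AddSubgroup G) (A : Finset G) : Prop :=
  ∀ a ∈ A, ∀ h ∈ H, a + h ∈ A

/-- `A` is `(H,−j)`-periodic: obtained from an `H`-periodic set by deleting `j` elements. -/
def HPeriodicMinus (H : AddSubgroup G) (j : ℕ) (A : Finset G) : Prop :=
  ∃ B : Finset G, HPeriodic H B ∧ A ⊆ B ∧ B.card = A.card + j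

/-- An `H`-decomposition of `A`: each block is the nonempty intersection of `A`
with some `H`-coset, the blocks are pairwise disjoint and cover `A`. -/
def IsHDecomp (H : AddSubgroup G) (A : Finset G) {m : ℕ} (Ai : Fin m → Finset G) : Prop :=
  (∀ i, (Ai i).Nonempty) ∧
  (∀ i, ∃ g : G, Ai i = A.filter fun x => x - g ∈ H) ∧
  (∀ i j, i ≠ j → Disjoint (Ai i) (Ai j)) ∧
  A = Finset.univ.biUnion Ai

/-- An `H`-progression with difference `d` (modulo `H`): an `H`-decomposition whose
consecutive blocks lie in consecutive cosets `…, C, C + d, …`. -/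
def IsHProg (H : AddSubgroup G) (A : Finset G) {m : ℕ} (Ai : Fin m → Finset G) (d : G) : Prop :=
  IsHDecomp H A Ai ∧
  ∀ (i : ℕ) (hi : i + 1 < m),
    ∀ x ∈ Ai ⟨i, by omega⟩, ∀ y ∈ Ai ⟨i + 1, hi⟩, y - x - d ∈ H

/-- `{S,T}` is an `H`-essential pair. -/
def IsEssentialPair (H : AddSubgroup G) (S T : Finset G) : Prop :=
  ∃ (u t : ℕ) (Si : Fin (u + 1) → Finset G) (Ti : Fin (t + 1) → Finset G) (d : G),
    IsHProg H S Si d ∧ IsHProg H T Ti d ∧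
    ((S : Set G) + (H : Set G)).ncard = S.card + Nat.card H ∧
    ((T : Set G) + (H : Set G)).ncard = T.card + Nat.card H ∧
    ((Nat.card H - 1 = (Si 0).card ∧ (Si 0).card = (Si (Fin.last u)).card ∧
        (Si (Fin.last u)).card = (Ti 0).card ∧ (Ti 0).card = (Ti (Fin.last t)).card ∧
        (Ti (Fin.last t)).card = 1) ∨
      (∃ (_ : 1 ≤ u) (_ : 1 ≤ t),
        (Si (Fin.last u)).card = 1 ∧ (Ti (Fin.last t)).card = 1 ∧
        (Si ⟨u - 1, by omega⟩).card = Nat.card H - 1 ∧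
        (Ti ⟨t - 1, by omega⟩).card = Nat.card H - 1 ∧
        Ti ⟨t - 1, by omega⟩ + Si (Fin.last u) = Ti (Fin.last t) + Si ⟨u - 1, by omega⟩) ∨
      (∃ K0 K1 : AddSubgroup G, Nat.card K0 = 2 ∧ Nat.card K1 = 2 ∧
        K0 ⊔ K1 = H ∧ K0 ⊓ K1 = ⊥ ∧
        (∃ a : G, ↑(Si 0) = a +ᵥ (K0 : Set G)) ∧ (∃ a : G, ↑(Ti 0) = a +ᵥ (K0 : Set G)) ∧
        (∃ a : G, ↑(Si (Fin.last u)) = a +ᵥ (K1 : Set G)) ∧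
        (∃ a : G, ↑(Ti (Fin.last t)) = a +ᵥ (K1 : Set G))))

/-- `{S,T}` is a Klein pair: an `H`-essential pair of type (iii). -/
def IsKleinPair (H : AddSubgroup G) (S T : Finset G) : Prop :=
  ∃ (u t : ℕ) (Si : Fin (u + 1) → Finset G) (Ti : Fin (t + 1) → Finset G) (d : G),
    IsHProg H S Si d ∧ IsHProg H T Ti d ∧
    ((S : Set G) + (H : Set G)).ncard = S.card + Nat.card H ∧
    ((T : Set G) + (H : Set G)).ncard = T.card + Nat.card H ∧
    (∃ K0 K1 : AddSubgroup G, Nat.card K0 = 2 ∧ Nat.card K1 = 2 ∧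
      K0 ⊔ K1 = H ∧ K0 ⊓ K1 = ⊥ ∧
      (∃ a : G, ↑(Si 0) = a +ᵥ (K0 : Set G)) ∧ (∃ a : G, ↑(Ti 0) = a +ᵥ (K0 : Set G)) ∧
      (∃ a : G, ↑(Si (Fin.last u)) = a +ᵥ (K1 : Set G)) ∧
      (∃ a : G, ↑(Ti (Fin.last t)) = a +ᵥ (K1 : Set G)))

/-- `X` is admissible for the `k`-th connectivity of `S` inside the subgroup `L`:
`X ⊆ L`, `|X| ≥ k`, and the complement of `X + S` in `L` has at least `k` elements. -/
def GoodIn (L : AddSubgroup G) (S : Finset G) (k : ℕ) (X : Finset G) : Prop :=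
  ↑X ⊆ (L : Set G) ∧ k ≤ X.card ∧
    ∃ Y : Finset G, ↑Y ⊆ (L : Set G) ∧ k ≤ Y.card ∧ Disjoint Y (X + S)

/-- The `k`-th isoperimetric connectivity of `S`, computed inside the subgroup `L`. -/
noncomputable def kConnIn (L : AddSubgroup G) (S : Finset G) (k : ℕ) : ℕ :=
  if ∃ X, GoodIn L S k X then
    sInf {m | ∃ X, GoodIn L S k X ∧ ((X + S) \ X).card = m}
  else Nat.card L - 2 * k + 1

/-- `X` is a `k`-fragment of `S` inside the subgroup `L`. -/
def IsFragmentIn (L : AddSubgroup G) (S : Finset G) (k : ℕ) (X : Finset G) : Prop :=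
  GoodIn L S k X ∧ ((X + S) \ X).card = kConnIn L S k

/-- The `k`-th isoperimetric connectivity of `S`. -/
noncomputable def kConn (S : Finset G) (k : ℕ) : ℕ := kConnIn ⊤ S k

/-- `X` is a `k`-fragment of `S`. -/
def IsFragment (S : Finset G) (k : ℕ) (X : Finset G) : Prop := IsFragmentIn ⊤ S k X

/-- `A` is a `k`-atom of `S`: a `k`-fragment of minimal cardinality. -/
def IsKAtom (S : Finset G) (k : ℕ) (A : Finset G) : Prop :=
  IsFragment S k A ∧ ∀ X : Finset G, IsFragment S k X → A.card ≤ X.card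

/-- `S` is degenerate: some subgroup is a `2`-fragment of `S`. -/
def Degenerate (S : Finset G) : Prop :=
  ∃ (H : AddSubgroup G) (F : Finset G), ↑F = (H : Set G) ∧ IsFragment S 2 F

/-- `H` is a hyper-atom of `S`: a maximal subgroup which is a `2`-fragment of `S`. -/
def IsHyperAtom (S : Finset G) (H : AddSubgroup G) : Prop :=
  (∃ F : Finset G, ↑F = (H : Set G) ∧ IsFragment S 2 F) ∧
  ∀ (K : AddSubgroup G) (F : Finset G), ↑F = (K : Set G) → IsFragment S 2 F → H ≤ K → K = H

/-- `H` is a hyper-atom of `S` inside the subgroup `L`. -/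
def IsHyperAtomIn (L : AddSubgroup G) (S : Finset G) (H : AddSubgroup G) : Prop :=
  (∃ F : Finset G, ↑F = (H : Set G) ∧ IsFragmentIn L S 2 F) ∧
  ∀ (K : AddSubgroup G) (F : Finset G), ↑F = (K : Set G) → IsFragmentIn L S 2 F → H ≤ K → K = H

/-- `H` is a super-atom of `S`: either `H = ⟨S*⟩` or `H` is a hyper-atom of `S*`
regarded as a generating subset of `⟨S*⟩`. -/
def IsSuperAtom (S : Finset G) (H : AddSubgroup G) : Prop :=
  ∃ a ∈ S,
    H = AddSubgroup.closure ↑(S.image fun x => x - a) ∨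
      IsHyperAtomIn (AddSubgroup.closure ↑(S.image fun x => x - a))
        (S.image fun x => x - a) H

/-- `S` is a Vosper subset: `|X+S| ≥ min (|A|−1, |X|+|S|)` for every `X` with `|X| ≥ 2`. -/
def VosperSubset {A : Type*} [AddCommGroup A] (S : Finset A) : Prop :=
  ∀ X : Finset A, 2 ≤ X.card → min (Nat.card A - 1) (X.card + S.card) ≤ (X + S).card

/-- `A = A0 ∪ A1` is a quasi-`H`-periodic partition: `A0 + H = A0` and
`A1` is contained in a single `H`-coset. -/
def QuasiHPartition (H : AddSubgroup G) (A A0 A1 : Finset G) : Prop :=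
  A = A0 ∪ A1 ∧ Disjoint A0 A1 ∧ HPeriodic H A0 ∧ ∃ g : G, ↑A1 ⊆ g +ᵥ (H : Set G)

end Defs

theorem frag_erase {G : Type*} [AddCommGroup G] (S : Finset G) (h0S : (0 : G) ∈ S) (k : ℕ)
    (F : Finset G) (hF : IsFragment S k F) (hcard : k + 1 ≤ F.card)
    (a : G) (ha : a ∈ F + S) (b : G) (hb : (({a} : Finset G) - S) ∩ F = {b}) :
    IsFragment S k (F.erase b) := by
  obtain ⟨⟨-, hFk, Y, -, hYk, hYdisj⟩, hFκ⟩ := hF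
  have hbF : b ∈ F := by
    have : b ∈ (({a} : Finset G) - S) ∩ F := hb ▸ Finset.mem_singleton_self b
    exact (Finset.mem_inter.1 this).2
  set F' := F.erase b with hF'
  have hanotin : a ∉ F' + S := by
    intro h
    obtain ⟨y, hy, s, hs, hys⟩ := Finset.mem_add.1 h
    have hyb : y ∈ (({a} : Finset G) - S) ∩ F := by
      refine Finset.mem_inter.2 ⟨?_, Finset.mem_of_mem_erase hy⟩
      simp only [Finset.mem_sub, Finset.mem_singleton]
      exact ⟨a, rfl, s, hs, (eq_sub_of_add_eq hys).symm⟩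
    rw [hb, Finset.mem_singleton] at hyb
    exact (Finset.mem_erase.1 hy).1 hyb
  have hsubsets : F' + S ⊆ F + S := Finset.add_subset_add_right (Finset.erase_subset _ _)
  have hsub : (F' + S) \ F' ⊆ (((F + S) \ F) ∪ {b}).erase a := by
    intro x hx
    obtain ⟨hx1, hx2⟩ := Finset.mem_sdiff.1 hx
    refine Finset.mem_erase.2 ⟨fun h => hanotin (h ▸ hx1), ?_⟩
    by_cases hxF : x ∈ F
    · have : x = b := by
        by_contra hne
        exact hx2 (Finset.mem_erase.2 ⟨hne, hxF⟩)
      exact Finset.mem_union_right _ (this ▸ Finset.mem_singleton_self b)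
    · exact Finset.mem_union_left _ (Finset.mem_sdiff.2 ⟨hsubsets hx1, hxF⟩)
  have haU : a ∈ ((F + S) \ F) ∪ {b} := by
    by_cases haF : a ∈ F
    · have : a ∈ (({a} : Finset G) - S) ∩ F := by
        refine Finset.mem_inter.2 ⟨?_, haF⟩
        simp only [Finset.mem_sub, Finset.mem_singleton]
        exact ⟨a, rfl, 0, h0S, sub_zero a⟩
      rw [hb, Finset.mem_singleton] at this
      exact Finset.mem_union_right _ (this ▸ Finset.mem_singleton_self b)
    · exact Finset.mem_union_left _ (Finset.mem_sdiff.2 ⟨ha, haF⟩)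
  have hcard_le : ((F' + S) \ F').card ≤ kConnIn ⊤ S k := by
    calc ((F' + S) \ F').card ≤ ((((F + S) \ F) ∪ {b}).erase a).card :=
          Finset.card_le_card hsub
      _ = (((F + S) \ F) ∪ {b}).card - 1 := Finset.card_erase_of_mem haU
      _ ≤ (((F + S) \ F).card + 1) - 1 := by
          have := Finset.card_union_le ((F + S) \ F) ({b} : Finset G)
          simp only [Finset.card_singleton] at this
          omega
      _ = kConnIn ⊤ S k := by omega
  have goodF : GoodIn ⊤ S k F := ⟨fun x _ => trivial, hFk, Y, fun x _ => trivial, hYk, hYdisj⟩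
  have goodF' : GoodIn ⊤ S k F' := by
    refine ⟨fun x _ => trivial, ?_, Y, fun x _ => trivial, hYk, hYdisj.mono_right hsubsets⟩
    rw [hF', Finset.card_erase_of_mem hbF]
    omega
  have hex : ∃ X, GoodIn (⊤ : AddSubgroup G) S k X := ⟨F, goodF⟩
  have hκdef : kConnIn (⊤ : AddSubgroup G) S k =
      sInf {m | ∃ X, GoodIn (⊤ : AddSubgroup G) S k X ∧ ((X + S) \ X).card = m} := if_pos hex
  refine ⟨goodF', le_antisymm hcard_le ?_⟩
  rw [hκdef]
  exact Nat.sInf_le ⟨F', goodF', rfl⟩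

theorem inter_eq_filter {G : Type*} [AddCommGroup G] (S A : Finset G) (x : G) :
    (({x} : Finset G) - S) ∩ A = A.filter fun y => x - y ∈ S := by
  ext y
  simp only [Finset.mem_inter, Finset.mem_filter, Finset.mem_sub, Finset.mem_singleton]
  constructor
  · rintro ⟨⟨a, rfl, s, hs, rfl⟩, hyA⟩
    exact ⟨hyA, by simpa [sub_sub_cancel] using hs⟩
  · rintro ⟨hyA, hs⟩
    exact ⟨⟨x, rfl, x - y, hs, by abel⟩, hyA⟩

/-- Lemma 5.2 (colors in atoms). -/
theorem colors_lemma {G : Type*} [AddCommGroup G]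
    (S : Finset G) (h0S : (0 : G) ∈ S)
    (k : ℕ) (hk : 1 ≤ k)
    (hκ3 : kConn S 3 = S.card) :
    (∀ F : Finset G, IsFragment S k F → k + 1 ≤ F.card →
      ∀ a ∈ F + S, ∀ b : G, ({a} - S) ∩ F = {b} → IsFragment S k (F.erase b)) ∧
    (∀ A : Finset G, IsKAtom S k A → (0 : G) ∈ A → k + 1 ≤ A.card →
      (∀ x ∈ A + S, 2 ≤ (({x} - S) ∩ A).card) ∧
      (A.card ≤ ((A ×ˢ A).filter fun p => p.1 - p.2 ∈ S.erase 0).card ∧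
        ((A ×ˢ A).filter fun p => p.1 - p.2 ∈ S.erase 0).card =
          ∑ x ∈ A, (({x} - S.erase 0) ∩ A).card ∧
        ((A ×ˢ A).filter fun p => p.1 - p.2 ∈ S.erase 0).card + 2 * kConn S k ≤
          (S.card - 1) * A.card) ∧
      (∃ R ⊆ (A ×ˢ A).filter fun p => p.1 - p.2 ∈ S.erase 0,
        R.Nonempty ∧ ∑ p ∈ R, (p.1 - p.2) = 0)) := by
  refine ⟨fun F hF hc a ha b hb => frag_erase S h0S k F hF hc a ha b hb, ?_⟩
  intro A hA h0A hcardA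
  set S' := S.erase 0 with hS'def
  set E := (A ×ˢ A).filter fun p : G × G => p.1 - p.2 ∈ S' with hEdef
  -- (1)
  have h1 : ∀ x ∈ A + S, 2 ≤ ((({x} : Finset G) - S) ∩ A).card := by
    intro x hx
    by_contra hlt
    push_neg at hlt
    have hne : ((({x} : Finset G) - S) ∩ A).Nonempty := by
      obtain ⟨y, hy, s, hs, hys⟩ := Finset.mem_add.1 hx
      exact ⟨y, Finset.mem_inter.2 ⟨Finset.mem_sub.2 ⟨x, Finset.mem_singleton_self x, s, hs,
        (eq_sub_of_add_eq hys).symm⟩, hy⟩⟩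
    have hone : ((({x} : Finset G) - S) ∩ A).card = 1 :=
      le_antisymm (by omega) (Finset.card_pos.2 hne)
    obtain ⟨b, hb⟩ := Finset.card_eq_one.1 hone
    have hfrag := frag_erase S h0S k A hA.1 hcardA x hx b hb
    have hle := hA.2 _ hfrag
    have hbA : b ∈ A := by
      have : b ∈ (({x} : Finset G) - S) ∩ A := hb ▸ Finset.mem_singleton_self b
      exact (Finset.mem_inter.1 this).2
    rw [Finset.card_erase_of_mem hbA] at hle
    omega
  -- E.card as a sum
  have hEsum : E.card = ∑ x ∈ A, ((({x} : Finset G) - S') ∩ A).card := by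
    rw [hEdef, Finset.card_filter, Finset.sum_product]
    refine Finset.sum_congr rfl fun x _ => ?_
    rw [inter_eq_filter, Finset.card_filter]
  -- each x in A has at least one S'-neighbour in A
  have hlow : ∀ x ∈ A, 1 ≤ ((({x} : Finset G) - S') ∩ A).card := by
    intro x hx
    have hxAS : x ∈ A + S := Finset.mem_add.2 ⟨x, hx, 0, h0S, add_zero x⟩
    have h2 := h1 x hxAS
    rw [inter_eq_filter] at h2 ⊢
    have hsub2 : A.filter (fun y => x - y ∈ S) ⊆ A.filter (fun y => x - y ∈ S') ∪ {x} := by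
      intro y hy
      obtain ⟨hyA, hyS⟩ := Finset.mem_filter.1 hy
      by_cases h0 : x - y = 0
      · exact Finset.mem_union_right _ (Finset.mem_singleton.2 (sub_eq_zero.1 h0).symm)
      · exact Finset.mem_union_left _
          (Finset.mem_filter.2 ⟨hyA, Finset.mem_erase.2 ⟨h0, hyS⟩⟩)
    have hc1 := Finset.card_le_card hsub2
    have hc2 := Finset.card_union_le (A.filter (fun y => x - y ∈ S')) ({x} : Finset G)
    simp only [Finset.card_singleton] at hc2
    omega
  -- (2) first inequality
  have hAE : A.card ≤ E.card := by
    rw [hEsum]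
    calc A.card = ∑ _x ∈ A, 1 := by simp
      _ ≤ ∑ x ∈ A, ((({x} : Finset G) - S') ∩ A).card := Finset.sum_le_sum hlow
  -- (2) upper bound
  have hupper : E.card + 2 * kConn S k ≤ (S.card - 1) * A.card := by
    have hS'card : S'.card = S.card - 1 := Finset.card_erase_of_mem h0S
    have hmaps : ∀ p ∈ A ×ˢ S', p.1 + p.2 ∈ A + S := by
      intro p hp
      obtain ⟨hp1, hp2⟩ := Finset.mem_product.1 hp
      exact Finset.mem_add.2 ⟨p.1, hp1, p.2, Finset.mem_of_mem_erase hp2, rfl⟩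
    have hT : (A ×ˢ S').card =
        ∑ x ∈ A + S, ((A ×ˢ S').filter fun p => p.1 + p.2 = x).card :=
      Finset.card_eq_sum_card_fiberwise hmaps
    have hfiber : ∀ x : G, ((A ×ˢ S').filter fun p => p.1 + p.2 = x).card =
        ((({x} : Finset G) - S') ∩ A).card := by
      intro x
      rw [inter_eq_filter]
      refine Finset.card_bij (fun p _ => p.1) ?_ ?_ ?_
      · intro p hp
        obtain ⟨hp1, hp2⟩ := Finset.mem_filter.1 hp
        obtain ⟨hpa, hps⟩ := Finset.mem_product.1 hp1
        show p.1 ∈ _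
        refine Finset.mem_filter.2 ⟨hpa, ?_⟩
        have : x - p.1 = p.2 := by rw [← hp2]; abel
        rw [this]; exact hps
      · intro p hp q hq hpq
        obtain ⟨-, hp2⟩ := Finset.mem_filter.1 hp
        obtain ⟨-, hq2⟩ := Finset.mem_filter.1 hq
        have hpq' : p.1 = q.1 := hpq
        have h22 : p.2 = q.2 := by
          have h3 : p.1 + p.2 = q.1 + q.2 := hp2.trans hq2.symm
          rw [hpq'] at h3
          exact add_left_cancel h3
        exact Prod.ext hpq' h22
      · intro y hy
        obtain ⟨hyA, hs⟩ := Finset.mem_filter.1 hy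
        refine ⟨(y, x - y), Finset.mem_filter.2 ⟨Finset.mem_product.2 ⟨hyA, hs⟩, by
          show y + (x - y) = x; abel⟩, rfl⟩
    have hAsub : A ⊆ A + S := fun x hx => Finset.mem_add.2 ⟨x, hx, 0, h0S, add_zero x⟩
    have hsplit : A ∪ ((A + S) \ A) = A + S := Finset.union_sdiff_of_subset hAsub
    have hsum_split : ∑ x ∈ A + S, ((({x} : Finset G) - S') ∩ A).card =
        (∑ x ∈ A, ((({x} : Finset G) - S') ∩ A).card) +
          ∑ x ∈ (A + S) \ A, ((({x} : Finset G) - S') ∩ A).card := by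
      have h4 : ∑ x ∈ A ∪ ((A + S) \ A), ((({x} : Finset G) - S') ∩ A).card =
          (∑ x ∈ A, ((({x} : Finset G) - S') ∩ A).card) +
            ∑ x ∈ (A + S) \ A, ((({x} : Finset G) - S') ∩ A).card :=
        Finset.sum_union Finset.disjoint_sdiff
      rw [hsplit] at h4
      exact h4
    have hbdry : ∀ x ∈ (A + S) \ A, 2 ≤ ((({x} : Finset G) - S') ∩ A).card := by
      intro x hx
      obtain ⟨hx1, hx2⟩ := Finset.mem_sdiff.1 hx
      have h2 := h1 x hx1
      rw [inter_eq_filter] at h2 ⊢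
      have hsub2 : A.filter (fun y => x - y ∈ S) ⊆ A.filter (fun y => x - y ∈ S') := by
        intro y hy
        obtain ⟨hyA, hyS⟩ := Finset.mem_filter.1 hy
        have h0 : x - y ≠ 0 := fun h => hx2 ((sub_eq_zero.1 h) ▸ hyA)
        exact Finset.mem_filter.2 ⟨hyA, Finset.mem_erase.2 ⟨h0, hyS⟩⟩
      exact le_trans h2 (Finset.card_le_card hsub2)
    have hbdry_sum : 2 * ((A + S) \ A).card ≤
        ∑ x ∈ (A + S) \ A, ((({x} : Finset G) - S') ∩ A).card := by
      calc 2 * ((A + S) \ A).card = ∑ _x ∈ (A + S) \ A, 2 := by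
            rw [Finset.sum_const, smul_eq_mul, mul_comm]
        _ ≤ _ := Finset.sum_le_sum hbdry
    have hκA : ((A + S) \ A).card = kConn S k := hA.1.2
    have hfinal : E.card + 2 * kConn S k ≤ (A ×ˢ S').card := by
      rw [hT]
      calc E.card + 2 * kConn S k
          = (∑ x ∈ A, ((({x} : Finset G) - S') ∩ A).card) + 2 * ((A + S) \ A).card := by
            rw [hEsum, hκA]
        _ ≤ (∑ x ∈ A, ((({x} : Finset G) - S') ∩ A).card) +
              ∑ x ∈ (A + S) \ A, ((({x} : Finset G) - S') ∩ A).card :=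
            Nat.add_le_add_left hbdry_sum _
        _ = ∑ x ∈ A + S, ((({x} : Finset G) - S') ∩ A).card := hsum_split.symm
        _ = ∑ x ∈ A + S, ((A ×ˢ S').filter fun p => p.1 + p.2 = x).card :=
            Finset.sum_congr rfl fun x _ => (hfiber x).symm
    calc E.card + 2 * kConn S k ≤ (A ×ˢ S').card := hfinal
      _ = A.card * (S.card - 1) := by rw [Finset.card_product, hS'card]
      _ = (S.card - 1) * A.card := mul_comm _ _
  refine ⟨h1, ⟨hAE, hEsum, hupper⟩, ?_⟩
  -- (3): a cycle
  have hstep : ∀ x : G, ∃ y : G, x ∈ A → (y ∈ A ∧ x - y ∈ S') := by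
    intro x
    by_cases hx : x ∈ A
    · have hl := hlow x hx
      rw [inter_eq_filter] at hl
      obtain ⟨y, hy⟩ := Finset.card_pos.1 (lt_of_lt_of_le one_pos hl)
      obtain ⟨hyA, hs⟩ := Finset.mem_filter.1 hy
      exact ⟨y, fun _ => ⟨hyA, hs⟩⟩
    · exact ⟨0, fun h => absurd h hx⟩
  choose f hf using hstep
  set u : ℕ → G := fun n => f^[n] 0 with hu
  have huA : ∀ n, u n ∈ A := by
    intro n
    induction n with
    | zero => exact h0A
    | succ n ih =>
      have : u (n + 1) = f (u n) := Function.iterate_succ_apply' f n 0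
      rw [this]
      exact (hf (u n) ih).1
  have husucc : ∀ n, u (n + 1) = f (u n) := fun n => Function.iterate_succ_apply' f n 0
  have hrepeat : ∃ j, ∃ i, i < j ∧ u i = u j := by
    obtain ⟨n, -, m, -, hnm, hval⟩ :=
      Finset.exists_ne_map_eq_of_card_lt_of_maps_to
        (s := Finset.range (A.card + 1)) (t := A) (by simp) (fun n _ => huA n)
    rcases Nat.lt_or_ge n m with h | h
    · exact ⟨m, n, h, hval⟩
    · exact ⟨n, m, lt_of_le_of_ne h (fun e => hnm e.symm), hval.symm⟩
  set j := Nat.find hrepeat with hjdef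
  obtain ⟨i, hij, huij⟩ := Nat.find_spec hrepeat
  have hinj : ∀ n ∈ Finset.Ico i j, ∀ m ∈ Finset.Ico i j, u n = u m → n = m := by
    intro n hn m hm hval
    by_contra hne
    rcases Nat.lt_or_ge n m with h | h
    · exact Nat.find_min hrepeat (Finset.mem_Ico.1 hm).2 ⟨n, h, hval⟩
    · have h' : m < n := lt_of_le_of_ne h (fun e => hne e.symm)
      exact Nat.find_min hrepeat (Finset.mem_Ico.1 hn).2 ⟨m, h', hval.symm⟩
  refine ⟨(Finset.Ico i j).image fun n => (u n, u (n + 1)), ?_, ?_, ?_⟩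
  · intro p hp
    obtain ⟨n, hn, rfl⟩ := Finset.mem_image.1 hp
    refine Finset.mem_filter.2 ⟨Finset.mem_product.2 ⟨huA n, huA (n + 1)⟩, ?_⟩
    rw [husucc n]
    exact (hf (u n) (huA n)).2
  · exact ⟨(u i, u (i + 1)), Finset.mem_image.2 ⟨i, Finset.mem_Ico.2 ⟨le_refl i, hij⟩, rfl⟩⟩
  · rw [Finset.sum_image (fun n hn m hm h => hinj n hn m hm (congrArg Prod.fst h))]
    have : ∑ n ∈ Finset.Ico i j, (u n - u (n + 1)) =
        ∑ n ∈ Finset.range (j - i), (u (i + n) - u (i + n + 1)) := by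
      rw [Finset.sum_Ico_eq_sum_range]
    rw [this]
    have htel := Finset.sum_range_sub' (fun m => u (i + m)) (j - i)
    try simp only at htel
    have heq : ∑ n ∈ Finset.range (j - i), (u (i + n) - u (i + n + 1)) =
        u (i + 0) - u (i + (j - i)) := by
      rw [← htel]
      exact Finset.sum_congr rfl fun n _ => by rw [Nat.add_assoc]
    rw [heq, Nat.add_zero, Nat.add_sub_cancel' (Nat.le_of_lt hij), huij, sub_self]
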